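/- Let A, B be bounded linear operators on G such that Λ^{A,B} is a self-adjoint linear relation and the pair (A,B) is normalized. Then Λ^{A,B} = {(B*u, A*u) : u ∈ G}. -/

import Mathlib

open ContinuousLinearMap

variable {G : Type*} [NormedAddCommGroup G] [InnerProductSpace ℂ G] [CompleteSpace G]

/-- The operator `M^{A,B}` on `G × G`, `(x₁,x₂) ↦ (A x₁ - B x₂, B x₁ + A x₂)`. -/
noncomputable def MAB (A B : G →L[ℂ] G) : (G × G) →L[ℂ] (G × G) :=
  ((A.comp (fst ℂ G G)) - (B.comp (snd ℂ G G))).prod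
    ((B.comp (fst ℂ G G)) + (A.comp (snd ℂ G G)))

/-- The linear relation `Λ^{A,B} = {(x₁,x₂) : A x₁ = B x₂}`. -/
def LambdaAB (A B : G →L[ℂ] G) : Submodule ℂ (G × G) where
  carrier := {p | A p.1 = B p.2}
  add_mem' := by
    intro a b ha hb
    simp only [Set.mem_setOf_eq] at *
    simp [ha, hb]
  zero_mem' := by simp
  smul_mem' := by
    intro c p hp
    simp only [Set.mem_setOf_eq] at *
    simp [hp]

/-- The adjoint of a linear relation. -/
def relAdjoint (Λ : Submodule ℂ (G × G)) : Submodule ℂ (G × G) where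
  carrier := {p | ∀ q ∈ Λ, (inner ℂ p.1 q.2 : ℂ) = inner ℂ p.2 q.1}
  add_mem' := by
    intro a b ha hb q hq
    simp [inner_add_left, ha q hq, hb q hq]
  zero_mem' := by
    intro q hq; simp
  smul_mem' := by
    intro c p hp q hq
    simp [inner_smul_left, hp q hq]

/-- A linear relation is self-adjoint if it equals its adjoint. -/
def IsSelfAdjointRel (Λ : Submodule ℂ (G × G)) : Prop := relAdjoint Λ = Λ

/-- A bounded operator is boundedly invertible if it has a bounded two-sided inverse. -/
def IsBoundedlyInvertible {E F : Type*} [NormedAddCommGroup E] [NormedSpace ℂ E]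
    [NormedAddCommGroup F] [NormedSpace ℂ F] (T : E →L[ℂ] F) : Prop :=
  ∃ T' : F →L[ℂ] E, (∀ x, T' (T x) = x) ∧ (∀ y, T (T' y) = y)

/-- The pair `(A,B)` is normalized if `A B* = B A*` and `M^{A,B}` is boundedly invertible. -/
noncomputable def IsNormalized (A B : G →L[ℂ] G) : Prop :=
  A ∘L adjoint B = B ∘L adjoint A ∧ IsBoundedlyInvertible (MAB A B)

set_option maxHeartbeats 1000000 in
private lemma aux_exists_u (A B : G →L[ℂ] G) (hAB : A ∘L adjoint B = B ∘L adjoint A)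
    (M' : (G × G) →L[ℂ] (G × G)) (hM'M : ∀ x, M' (MAB A B x) = x)
    (hMM' : ∀ y, MAB A B (M' y) = y)
    (x : G × G) (hx : A x.1 = B x.2) :
    ∃ u : G, (adjoint B u, adjoint A u) = x := by
  classical
  set e := WithLp.prodContinuousLinearEquiv 2 ℂ G G with he
  set M2 : WithLp 2 (G × G) →L[ℂ] WithLp 2 (G × G) :=
    (e.symm : (G × G) →L[ℂ] WithLp 2 (G × G)) ∘L ((MAB A B) ∘L (e : WithLp 2 (G × G) →L[ℂ] G × G)) with hM2def
  set M2' : WithLp 2 (G × G) →L[ℂ] WithLp 2 (G × G) :=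
    (e.symm : (G × G) →L[ℂ] WithLp 2 (G × G)) ∘L (M' ∘L (e : WithLp 2 (G × G) →L[ℂ] G × G)) with hM2'def
  have hcomp : M2' ∘L M2 = ContinuousLinearMap.id ℂ _ := by
    ext p
    simp [hM2def, hM2'def, hM'M]
  have hadj : adjoint M2 ∘L adjoint M2' = ContinuousLinearMap.id ℂ _ := by
    rw [← adjoint_comp, hcomp, adjoint_id]
  set X : WithLp 2 (G × G) := e.symm x with hX
  set w : WithLp 2 (G × G) := adjoint M2' X with hwdef
  have hw : adjoint M2 w = X := by
    have := DFunLike.congr_fun hadj X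
    simpa using this
  set v : G := w.fst with hv
  set u : G := w.snd with hu
  have key : ∀ p : G × G, (inner ℂ x.1 p.1 : ℂ) + inner ℂ x.2 p.2
      = inner ℂ v ((MAB A B) p).1 + inner ℂ u ((MAB A B) p).2 := by
    intro p
    have h1 : (inner ℂ X (e.symm p) : ℂ) = inner ℂ w (M2 (e.symm p)) := by
      rw [← hw, adjoint_inner_left]
    have h2 : M2 (e.symm p) = e.symm ((MAB A B) p) := by
      simp [hM2def]
    rw [h2] at h1
    simpa [WithLp.prod_inner_apply, hX, he] using h1
  have hx1 : x.1 = adjoint A v + adjoint B u := by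
    apply ext_inner_right ℂ
    intro p₁
    have := key (p₁, 0)
    simp only [MAB, prod_apply, coe_comp', Function.comp_apply, coe_fst', coe_snd',
      ContinuousLinearMap.sub_apply, ContinuousLinearMap.add_apply, map_zero, sub_zero,
      zero_add, add_zero, inner_zero_right] at this
    rw [this, inner_add_left, adjoint_inner_left, adjoint_inner_left]
  have hx2 : x.2 = -(adjoint B v) + adjoint A u := by
    apply ext_inner_right ℂ
    intro p₂
    have := key (0, p₂)
    simp only [MAB, prod_apply, coe_comp', Function.comp_apply, coe_fst', coe_snd',
      ContinuousLinearMap.sub_apply, ContinuousLinearMap.add_apply, map_zero, zero_sub,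
      zero_add, add_zero, inner_zero_right, zero_add] at this
    rw [this, inner_add_left, inner_neg_left, inner_neg_right, adjoint_inner_left,
      adjoint_inner_left]
  -- from x ∈ Λ and AB* = BA*, get A A* v + B B* v = 0
  have hABu : A (adjoint B u) = B (adjoint A u) := by
    have := DFunLike.congr_fun hAB u
    simpa using this
  have hzero : A (adjoint A v) + B (adjoint B v) = 0 := by
    have h := hx
    rw [hx1, hx2] at h
    simp only [map_add, map_neg, hABu] at h
    have h3 : A (adjoint A v) = -(B (adjoint B v)) := by
      exact add_right_cancel h
    rw [h3]
    simp
  have hv0 : adjoint A v = 0 ∧ adjoint B v = 0 := by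
    have hsum : (inner ℂ (adjoint A v) (adjoint A v) : ℂ)
        + inner ℂ (adjoint B v) (adjoint B v) = 0 := by
      rw [adjoint_inner_left, adjoint_inner_left, ← inner_add_right, hzero, inner_zero_right]
    have hre : RCLike.re ((inner ℂ (adjoint A v) (adjoint A v) : ℂ)
        + inner ℂ (adjoint B v) (adjoint B v)) = 0 := by rw [hsum]; simp
    have hr : ‖adjoint A v‖ ^ 2 + ‖adjoint B v‖ ^ 2 = 0 := by
      simpa [map_add, ← @norm_sq_eq_re_inner ℂ, ← Complex.ofReal_pow] using hre
    have ha := sq_nonneg ‖adjoint A v‖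
    have hb := sq_nonneg ‖adjoint B v‖
    have h1 : ‖adjoint A v‖ ^ 2 = 0 ∧ ‖adjoint B v‖ ^ 2 = 0 :=
      ⟨by linarith, by linarith⟩
    exact ⟨norm_eq_zero.mp (pow_eq_zero_iff two_ne_zero |>.mp h1.1),
      norm_eq_zero.mp (pow_eq_zero_iff two_ne_zero |>.mp h1.2)⟩
  refine ⟨u, ?_⟩
  ext
  · rw [hx1, hv0.1, zero_add]
  · rw [hx2, hv0.2, neg_zero, zero_add]

/-- If `(A,B)` is a normalized parameterization of a self-adjoint relation,
then `Λ^{A,B} = {(B*u, A*u) : u ∈ G}`. -/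
theorem lambdaAB_eq_range_adjoints (A B : G →L[ℂ] G)
    (hΛ : IsSelfAdjointRel (LambdaAB A B)) (hnorm : IsNormalized A B) :
    (LambdaAB A B : Set (G × G)) = Set.range (fun u : G => (adjoint B u, adjoint A u)) := by
  obtain ⟨hAB, M', hM'M, hMM'⟩ := hnorm
  ext x
  simp only [SetLike.mem_coe, Set.mem_range]
  constructor
  · intro hx
    exact aux_exists_u A B hAB M' hM'M hMM' x hx
  · rintro ⟨u, rfl⟩
    show A (adjoint B u) = B (adjoint A u)
    simpa using DFunLike.congr_fun hAB u
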